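/- Cone widening for n < 1: if 0 < n < 1, then there exists a vector ζ with η̃(ζ,ζ) > 0 (timelike for the Gordon metric) but η(ζ,ζ) < 0 (spacelike for the Minkowski metric). Hence the η̃-causal cone strictly contains the η-causal cone. -/

import Mathlib

/-- The Minkowski inner product on ℝ⁴, signature (+,-,-,-). -/
def η (u v : Fin 4 → ℝ) : ℝ := u 0 * v 0 - u 1 * v 1 - u 2 * v 2 - u 3 * v 3

/-- Gordon metric applied to a pair of vectors. -/
noncomputable def gordon (ξ : Fin 4 → ℝ) (n : ℝ) (u v : Fin 4 → ℝ) : ℝ :=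
  η u v + ((1 - n^2)/n^2) * (η ξ u) * (η ξ v)

/-- Cone widening for 0 < n < 1: there is a Gordon-timelike vector that is
Minkowski-spacelike, and moreover every Minkowski-causal vector is Gordon-causal,
so the Gordon causal cone strictly contains the Minkowski causal cone. -/
theorem gordon_cone_widening (ξ : Fin 4 → ℝ) (hξ : η ξ ξ = 1)
    (n : ℝ) (hn0 : 0 < n) (hn1 : n < 1) :
    (∃ ζ : Fin 4 → ℝ, 0 < gordon ξ n ζ ζ ∧ η ζ ζ < 0) ∧
    (∀ ζ : Fin 4 → ℝ, 0 ≤ η ζ ζ → 0 ≤ gordon ξ n ζ ζ) := by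
  have hξ' : ξ 0 * ξ 0 - ξ 1 * ξ 1 - ξ 2 * ξ 2 - ξ 3 * ξ 3 = 1 := hξ
  have hc : 0 < (1 - n^2)/n^2 := div_pos (by nlinarith) (by positivity)
  set c : ℝ := (1 - n^2)/n^2 with hcdef
  have hA0 : 0 < ξ 0 * ξ 0 := by nlinarith [mul_self_nonneg (ξ 1), mul_self_nonneg (ξ 2), mul_self_nonneg (ξ 3)]
  have hA : ξ 0 ≠ 0 := fun h => by rw [h] at hA0; simp at hA0
  set S : ℝ := ξ 1 * ξ 1 / (ξ 0 * ξ 0) - 1 with hSdef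
  have hSneg : S < 0 := by
    have h1 : ξ 1 * ξ 1 / (ξ 0 * ξ 0) < 1 := (div_lt_one hA0).mpr (by nlinarith [mul_self_nonneg (ξ 2), mul_self_nonneg (ξ 3)])
    simp only [hSdef]; linarith
  set t : ℝ := Real.sqrt ((1 + c/2)/(-S)) with htdef
  have ht2 : t^2 = (1 + c/2)/(-S) :=
    Real.sq_sqrt (div_nonneg (by linarith) (by linarith))
  have hSne : S ≠ 0 := ne_of_lt hSneg
  have hts : t^2 * S = -(1 + c/2) := by
    rw [ht2]; field_simp
  set ζ : Fin 4 → ℝ := ![ξ 0 + t * (ξ 1 / ξ 0), ξ 1 + t, ξ 2, ξ 3] with hζdef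
  have hζ0 : ζ 0 = ξ 0 + t * (ξ 1 / ξ 0) := rfl
  have hζ1 : ζ 1 = ξ 1 + t := rfl
  have hζ2 : ζ 2 = ξ 2 := rfl
  have hζ3 : ζ 3 = ξ 3 := rfl
  have h1 : η ξ ζ = 1 := by
    unfold η
    rw [hζ0, hζ1, hζ2, hζ3]
    field_simp
    linear_combination hξ'
  have h2 : η ζ ζ = 1 + t^2 * S := by
    unfold η
    rw [hζ0, hζ1, hζ2, hζ3, hSdef]
    field_simp
    linear_combination (ξ 0 * ξ 0) * hξ'
  constructor
  · refine ⟨ζ, ?_, ?_⟩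
    · unfold gordon
      rw [h1, h2, hts]
      linarith
    · rw [h2, hts]; linarith
  · intro ζ' hζ'
    unfold gordon
    nlinarith [mul_nonneg hc.le (mul_self_nonneg (η ξ ζ'))]
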